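/- For every c ∈ ℝ and every y, y' ∈ ℝ^N: sup_{u ∈ [0,1]^N} Σ_{a ∈ A} w_u(a)·1{t(a, y) ≥ c} = sup_{u ∈ [0,1]^N} Σ_{a ∈ A} w_u(a)·1{t(a, y') ≥ c}, and this supremum is attained at some u ∈ [0,1]^N. (That is, the worst-case tail probability of the stratified rank score statistic under the sensitivity model with bias at most Γ does not depend on the outcome vector used to compute ranks, and the worst case is achieved.) -/
import Mathlib


open Finset

/-- 'First'-method rank: ties are broken by index. -/
noncomputable def rankF {m : ℕ} (v : Fin m → ℝ) (i : Fin m) : ℕ :=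
  (Finset.univ.filter fun j => v j < v i ∨ (v j = v i ∧ j ≤ i)).card

lemma rankF_pos {m : ℕ} (v : Fin m → ℝ) (i : Fin m) : 1 ≤ rankF v i := by
  have : i ∈ Finset.univ.filter fun j => v j < v i ∨ (v j = v i ∧ j ≤ i) := by
    simp
  exact Finset.card_pos.mpr ⟨i, this⟩

lemma rankF_le {m : ℕ} (v : Fin m → ℝ) (i : Fin m) : rankF v i ≤ m := by
  calc rankF v i ≤ (Finset.univ : Finset (Fin m)).card := Finset.card_filter_le _ _
  _ = m := by simp

lemma rankF_lt {m : ℕ} (v : Fin m → ℝ) {i j : Fin m}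
    (h : v i < v j ∨ (v i = v j ∧ i < j)) : rankF v i < rankF v j := by
  apply Finset.card_lt_card
  constructor
  · intro k hk
    simp only [mem_filter, mem_univ, true_and] at hk ⊢
    rcases h with h | ⟨h1, h2⟩
    · rcases hk with hk | ⟨hk1, hk2⟩
      · exact Or.inl (lt_trans hk h)
      · exact Or.inl (hk1 ▸ h)
    · rcases hk with hk | ⟨hk1, hk2⟩
      · exact Or.inl (h1 ▸ hk)
      · exact Or.inr ⟨hk1.trans h1, hk2.trans h2.le⟩
  · intro hsub
    have hj : j ∈ Finset.univ.filter fun k => v k < v i ∨ (v k = v i ∧ k ≤ i) := by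
      apply hsub; simp
    simp only [mem_filter, mem_univ, true_and] at hj
    rcases h with h | ⟨h1, h2⟩ <;> rcases hj with hj | ⟨hj1, hj2⟩
    · exact absurd (lt_trans h hj) (lt_irrefl _)
    · exact absurd hj1 (ne_of_gt h)
    · exact absurd (h1 ▸ hj) (lt_irrefl _)
    · exact absurd hj2 (not_le.mpr h2)

lemma rankF_injective {m : ℕ} (v : Fin m → ℝ) : Function.Injective (rankF v) := by
  intro i j h
  by_contra hne
  rcases lt_trichotomy (v i) (v j) with hv | hv | hv
  · exact absurd h (ne_of_lt (rankF_lt v (Or.inl hv)))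
  · rcases lt_or_gt_of_ne (fun he : i = j => hne he) with hij | hij
    · exact absurd h (ne_of_lt (rankF_lt v (Or.inr ⟨hv, hij⟩)))
    · exact absurd h.symm (ne_of_lt (rankF_lt v (Or.inr ⟨hv.symm, hij⟩)))
  · exact absurd h.symm (ne_of_lt (rankF_lt v (Or.inl hv)))

noncomputable def rankEquiv {m : ℕ} (v : Fin m → ℝ) : Fin m ≃ Fin m :=
  Equiv.ofBijective (fun i => ⟨rankF v i - 1, by have := rankF_le v i; have := rankF_pos v i; omega⟩)
    (Finite.injective_iff_bijective.mp (by
      intro i j h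
      apply rankF_injective v
      have h1 := rankF_pos v i
      have h2 := rankF_pos v j
      have := Fin.mk.injEq (rankF v i - 1) _ (rankF v j - 1) _ |>.mp h  -- maybe simpler
      omega))

lemma rank_perm {m : ℕ} (v v' : Fin m → ℝ) :
    ∃ σ : Equiv.Perm (Fin m), ∀ i, rankF v' (σ i) = rankF v i := by
  refine ⟨(rankEquiv v).trans (rankEquiv v').symm, fun i => ?_⟩
  set j := ((rankEquiv v).trans (rankEquiv v').symm) i with hj
  have key : rankEquiv v' j = rankEquiv v i := by
    rw [hj]; simp
  have h1 := rankF_pos v i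
  have h2 := rankF_pos v' j
  have hval := congrArg Fin.val key
  simp only [rankEquiv, Equiv.ofBijective_apply] at hval
  omega

/-- The worst-case tail probability of the stratified rank score statistic under the
sensitivity model with bias at most `Γ = exp γ` does not depend on the outcome vector
used to compute the ranks, and the worst case is attained at some `u ∈ [0,1]^N`. -/
theorem stmt5 (S : ℕ) (hS : 1 ≤ S) (n : Fin S → ℕ) (hn : ∀ s, 1 ≤ n s)
    (γ : ℝ) (hγ : 0 ≤ γ) (φ : Fin S → ℕ → ℝ)
    (hφ : ∀ s, ∀ a b : ℕ, 1 ≤ a → a ≤ b → b ≤ n s → φ s a ≤ φ s b)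
    (c : ℝ) (y y' : ∀ s, Fin (n s) → ℝ) :
    -- the set of assignments with exactly one treated unit per matched set
    let A : Finset (∀ s, Fin (n s) → Bool) :=
      Finset.univ.filter fun a => ∀ s, (Finset.univ.filter fun i => a s i = true).card = 1
    -- sensitivity-model weight of an assignment
    let w : (∀ s, Fin (n s) → ℝ) → (∀ s, Fin (n s) → Bool) → ℝ := fun u a =>
      ∏ s, (Real.exp (γ * ∑ i, if a s i then u s i else 0)) /
        (∑ i, Real.exp (γ * u s i))
    -- stratified rank score statistic
    let t : (∀ s, Fin (n s) → Bool) → (∀ s, Fin (n s) → ℝ) → ℝ := fun a v =>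
      ∑ s, ∑ i, if a s i then φ s (rankF (v s) i) else 0
    -- tail probability of the statistic at c, under confounding u and outcomes v
    let tail : (∀ s, Fin (n s) → ℝ) → (∀ s, Fin (n s) → ℝ) → ℝ := fun u v =>
      ∑ a ∈ A, w u a * (if c ≤ t a v then 1 else 0)
    let U : Set (∀ s, Fin (n s) → ℝ) := {u | ∀ s i, u s i ∈ Set.Icc (0 : ℝ) 1}
    (sSup ((fun u => tail u y) '' U) = sSup ((fun u => tail u y') '' U)) ∧
    ∃ u ∈ U, tail u y = sSup ((fun u => tail u y) '' U) := by
  intro A w t tail U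
  -- one direction of image inclusion
  have key : ∀ v v' : (∀ s, Fin (n s) → ℝ), ∀ u ∈ U, ∃ u' ∈ U, tail u' v' = tail u v := by
    intro v v' u hu
    choose σ hσ using fun s => rank_perm (v s) (v' s)
    refine ⟨fun s j => u s ((σ s).symm j), fun s i => hu s _, ?_⟩
    show ∑ a ∈ A, _ = ∑ a ∈ A, _
    set Ψ := Equiv.piCongrRight fun s => (σ s).arrowCongr (Equiv.refl Bool) with hΨ
    have haeq : ∀ (a : ∀ s, Fin (n s) → Bool) s j, Ψ a s j = a s ((σ s).symm j) := by
      intro a s j; simp [hΨ, Equiv.piCongrRight, Equiv.arrowCongr]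
    refine (Finset.sum_equiv Ψ ?_ ?_).symm
    · intro a
      have hcard : ∀ s, (Finset.univ.filter fun i => Ψ a s i = true).card
          = (Finset.univ.filter fun i => a s i = true).card := by
        intro s
        refine Finset.card_equiv (σ s).symm fun i => ?_
        simp [haeq]
      simp only [A, Finset.mem_filter, Finset.mem_univ, true_and]
      constructor <;> intro h s
      · rw [hcard s]; exact h s
      · rw [← hcard s]; exact h s
    · intro a ha
      have hw : (w u a : ℝ) = w (fun s j => u s ((σ s).symm j)) (Ψ a) := by
        refine Finset.prod_congr rfl fun s _ => ?_
        simp only [haeq]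
        rw [Equiv.sum_comp (σ s).symm (fun j => if a s j = true then u s j else 0),
          Equiv.sum_comp (σ s).symm (fun j => Real.exp (γ * u s j))]
      have ht : t (Ψ a) v' = t a v := by
        refine Finset.sum_congr rfl fun s _ => ?_
        refine ((Equiv.sum_comp (σ s)
          (fun i => if Ψ a s i = true then φ s (rankF (v' s) i) else 0)).symm.trans ?_)
        refine Finset.sum_congr rfl fun j _ => ?_
        rw [haeq, Equiv.symm_apply_apply, hσ]
      rw [hw, ht]
  have himg : ∀ v v', (fun u => tail u v) '' U ⊆ (fun u => tail u v') '' U := by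
    rintro v v' x ⟨u, hu, rfl⟩
    obtain ⟨u', hu', h⟩ := key v v' u hu
    exact ⟨u', hu', h⟩
  have himgeq : (fun u => tail u y) '' U = (fun u => tail u y') '' U :=
    Set.Subset.antisymm (himg y y') (himg y' y)
  constructor
  · rw [himgeq]
  · -- attainment by compactness
    have hUc : IsCompact U := by
      have : U = Set.pi Set.univ (fun s => Set.pi Set.univ fun _ : Fin (n s) => Set.Icc (0:ℝ) 1) := by
        ext u; simp [U, Set.mem_pi, Set.mem_Icc, Pi.le_def, forall_and]
      rw [this]
      exact isCompact_univ_pi fun s => isCompact_univ_pi fun _ => isCompact_Icc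
    have hUne : U.Nonempty := ⟨fun _ _ => 0, fun s i => ⟨le_rfl, zero_le_one⟩⟩
    have hcont : Continuous fun u => tail u y := by
      apply continuous_finset_sum
      intro a _
      apply Continuous.mul ?_ continuous_const
      apply continuous_finset_prod
      intro s _
      haveI : Nonempty (Fin (n s)) := Fin.pos_iff_nonempty.mp (hn s)
      have hden : ∀ u : (∀ s, Fin (n s) → ℝ), (∑ i, Real.exp (γ * u s i)) ≠ 0 := by
        intro u
        exact ne_of_gt (Finset.sum_pos (fun i _ => Real.exp_pos _) Finset.univ_nonempty)
      apply Continuous.div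
      · apply Real.continuous_exp.comp
        apply Continuous.mul continuous_const
        apply continuous_finset_sum
        intro i _
        by_cases h : a s i = true
        · simp only [h, if_true]
          exact (continuous_apply i).comp (continuous_apply s)
        · simp only [h, if_false]
          exact continuous_const
      · apply continuous_finset_sum
        intro i _
        apply Real.continuous_exp.comp
        exact Continuous.mul continuous_const ((continuous_apply i).comp (continuous_apply s))
      · exact hden
    obtain ⟨u, hu, hsup⟩ := hUc.exists_sSup_image_eq hUne hcont.continuousOn
    exact ⟨u, hu, hsup.symm⟩
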